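/- Suppose Y_n = ∑_{k=1}^n X_k where {X_k} is a real-valued martingale difference sequence with |X_k| ≤ R for all k, and define W_n = ∑_{k=1}^n E[X_k² | X_1,...,X_{k-1}]. If W_n ≤ σ² holds deterministically, then for any positive integer K ≥ 1, with probability at least 1 - δ, |Y_n| ≤ √(8 max{W_n, σ²/2^K} log(2K/δ)) + (4/3) R log(2K/δ). -/

import Mathlib

open MeasureTheory ProbabilityTheory

lemma aux_exp_le_quad {u : ℝ} (h : |u| ≤ 1) : Real.exp u ≤ 1 + u + u ^ 2 := by
  have h2 := Real.exp_bound h (n := 2) (by norm_num)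
  have hsum : ∑ m ∈ Finset.range 2, u ^ m / m.factorial = 1 + u := by
    simp [Finset.sum_range_succ]
  rw [hsum] at h2
  have h3 := (abs_le.1 h2).2
  have h4 : Real.exp u - (1 + u) ≤ |u| ^ 2 * (3 / 4) := by
    calc Real.exp u - (1 + u) ≤ _ := h3
      _ ≤ |u| ^ 2 * (3 / 4) := by norm_num [Nat.factorial]
  nlinarith [sq_abs u, sq_nonneg u]

lemma aux_peel (σ2 w : ℝ) (hw : w ≤ σ2) (K : ℕ) (hK : 1 ≤ K) :
    ∃ j, j < K ∧ w ≤ σ2 / 2 ^ j ∧ σ2 / 2 ^ (j + 1) ≤ max w (σ2 / 2 ^ K) := by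
  classical
  set P : ℕ → Prop := fun j => w ≤ σ2 / 2 ^ j with hP
  have hP0 : P 0 := by simpa [hP] using hw
  set j := Nat.findGreatest P (K - 1) with hj
  have hPj : P j := Nat.findGreatest_spec (Nat.zero_le _) hP0
  have hjle : j ≤ K - 1 := Nat.findGreatest_le _
  refine ⟨j, lt_of_le_of_lt hjle (Nat.sub_lt hK one_pos), hPj, ?_⟩
  by_cases hjeq : j = K - 1
  · have h1 : j + 1 = K := by omega
    rw [h1]
    exact le_max_right _ _
  · have hlt : j + 1 ≤ K - 1 := Nat.succ_le_of_lt (lt_of_le_of_ne hjle hjeq)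
    have hnP : ¬ P (j + 1) := Nat.findGreatest_is_greatest (Nat.lt_succ_self j) hlt
    exact le_max_of_le_left (le_of_not_ge hnP)

section Aux

variable {Ω : Type*} {m0 : MeasurableSpace Ω} {μ : Measure Ω} [IsProbabilityMeasure μ]
  {ℱ : Filtration ℕ m0} {X : ℕ → Ω → ℝ} {R : ℝ}

lemma aux_S_meas (hadapt : ∀ k, StronglyMeasurable[ℱ k] (X k)) (n : ℕ) :
    StronglyMeasurable[ℱ n] (fun ω => ∑ k ∈ Finset.Icc 1 n, X k ω) :=
  Finset.stronglyMeasurable_fun_sum _ fun k hk =>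
    (hadapt k).mono (ℱ.mono (Finset.mem_Icc.1 hk).2)

lemma aux_V_meas (n : ℕ) :
    StronglyMeasurable[ℱ n]
      (fun ω => ∑ k ∈ Finset.Icc 1 n, (μ[fun ω' => X k ω' ^ 2|ℱ (k - 1)]) ω) :=
  Finset.stronglyMeasurable_fun_sum _ fun k hk =>
    stronglyMeasurable_condExp.mono (ℱ.mono ((Nat.sub_le k 1).trans (Finset.mem_Icc.1 hk).2))

lemma aux_int_of_bdd' {f : Ω → ℝ} (hf : AEStronglyMeasurable f μ) (C : ℝ)
    (h : ∀ᵐ ω ∂μ, ‖f ω‖ ≤ C) : Integrable f μ :=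
  (integrable_const C).mono' hf h

lemma aux_F_int (hadapt : ∀ k, StronglyMeasurable[ℱ k] (X k))
    (hbdd : ∀ k, ∀ᵐ ω ∂μ, |X k ω| ≤ R) (l : ℝ) (hl : |l| * R ≤ 1) (n : ℕ) :
    Integrable (fun ω => Real.exp (l * ∑ k ∈ Finset.Icc 1 n, X k ω
      - l ^ 2 * ∑ k ∈ Finset.Icc 1 n, (μ[fun ω' => X k ω' ^ 2|ℱ (k - 1)]) ω)) μ := by
  have hm : StronglyMeasurable (fun ω => Real.exp (l * ∑ k ∈ Finset.Icc 1 n, X k ω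
      - l ^ 2 * ∑ k ∈ Finset.Icc 1 n, (μ[fun ω' => X k ω' ^ 2|ℱ (k - 1)]) ω)) :=
    Real.continuous_exp.comp_stronglyMeasurable
      ((stronglyMeasurable_const.mul ((aux_S_meas hadapt n).mono (ℱ.le n))).sub
        (stronglyMeasurable_const.mul ((aux_V_meas n).mono (ℱ.le n))))
  refine aux_int_of_bdd' hm.aestronglyMeasurable (Real.exp n) ?_
  have hb : ∀ᵐ ω ∂μ, ∀ k, |X k ω| ≤ R := ae_all_iff.2 hbdd
  have hc : ∀ᵐ ω ∂μ, ∀ k, 0 ≤ (μ[fun ω' => X k ω' ^ 2|ℱ (k - 1)]) ω :=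
    ae_all_iff.2 fun k => condExp_nonneg (Filter.Eventually.of_forall fun ω => sq_nonneg _)
  filter_upwards [hb, hc] with ω hbω hcω
  rw [Real.norm_eq_abs, Real.abs_exp, Real.exp_le_exp]
  have h1 : l * ∑ k ∈ Finset.Icc 1 n, X k ω ≤ n := by
    rw [Finset.mul_sum]
    calc ∑ k ∈ Finset.Icc 1 n, l * X k ω ≤ ∑ _k ∈ Finset.Icc 1 n, (1:ℝ) :=
        Finset.sum_le_sum fun k _ => by
          have h2 : |l * X k ω| ≤ |l| * R := by
            rw [abs_mul]
            exact mul_le_mul_of_nonneg_left (hbω k) (abs_nonneg l)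
          exact (le_abs_self _).trans (h2.trans hl)
      _ = n := by simp
  have h2 : 0 ≤ ∑ k ∈ Finset.Icc 1 n, (μ[fun ω' => X k ω' ^ 2|ℱ (k - 1)]) ω :=
    Finset.sum_nonneg fun k _ => hcω k
  nlinarith [mul_nonneg (sq_nonneg l) h2]

lemma aux_mgf_le_one (hadapt : ∀ k, StronglyMeasurable[ℱ k] (X k))
    (hint : ∀ k, MemLp (X k) 2 μ)
    (hbdd : ∀ k, ∀ᵐ ω ∂μ, |X k ω| ≤ R)
    (hmds : ∀ k, 1 ≤ k → μ[X k | ℱ (k - 1)] =ᵐ[μ] 0)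
    (l : ℝ) (hl : |l| * R ≤ 1) (n : ℕ) :
    ∫ ω, Real.exp (l * ∑ k ∈ Finset.Icc 1 n, X k ω
      - l ^ 2 * ∑ k ∈ Finset.Icc 1 n, (μ[fun ω' => X k ω' ^ 2|ℱ (k - 1)]) ω) ∂μ ≤ 1 := by
  induction n with
  | zero => simp
  | succ n ih =>
    set C : Ω → ℝ := μ[fun ω' => X (n + 1) ω' ^ 2|ℱ n] with hCdef
    set G : Ω → ℝ := fun ω => Real.exp (l * ∑ k ∈ Finset.Icc 1 n, X k ω
      - l ^ 2 * ∑ k ∈ Finset.Icc 1 n, (μ[fun ω' => X k ω' ^ 2|ℱ (k - 1)]) ω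
      - l ^ 2 * C ω) with hGdef
    set eX : Ω → ℝ := fun ω => Real.exp (l * X (n + 1) ω) with heXdef
    have hrw : (fun ω => Real.exp (l * ∑ k ∈ Finset.Icc 1 (n + 1), X k ω
        - l ^ 2 * ∑ k ∈ Finset.Icc 1 (n + 1), (μ[fun ω' => X k ω' ^ 2|ℱ (k - 1)]) ω))
        = fun ω => G ω * eX ω := by
      funext ω
      simp only [hGdef, heXdef, hCdef, ← Real.exp_add,
        Finset.sum_Icc_succ_top (Nat.le_add_left 1 n), Nat.add_sub_cancel]
      congr 1
      ring
    have hXm : StronglyMeasurable (X (n + 1)) := (hadapt (n + 1)).mono (ℱ.le (n + 1))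
    have hGX_int : Integrable (fun ω => G ω * eX ω) μ := by
      rw [← hrw]; exact aux_F_int hadapt hbdd l hl (n + 1)
    have heX_int : Integrable eX μ := by
      refine aux_int_of_bdd' (Real.continuous_exp.comp_stronglyMeasurable
        (stronglyMeasurable_const.mul hXm)).aestronglyMeasurable (Real.exp 1) ?_
      filter_upwards [hbdd (n + 1)] with ω hω
      rw [heXdef, Real.norm_eq_abs, Real.abs_exp, Real.exp_le_exp]
      have h2 : |l * X (n + 1) ω| ≤ |l| * R := by
        rw [abs_mul]; exact mul_le_mul_of_nonneg_left hω (abs_nonneg l)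
      exact (le_abs_self _).trans (h2.trans hl)
    have hGm : StronglyMeasurable[ℱ n] G :=
      Real.continuous_exp.comp_stronglyMeasurable
        (((stronglyMeasurable_const.mul (aux_S_meas hadapt n)).sub
          (stronglyMeasurable_const.mul (aux_V_meas n))).sub
          (stronglyMeasurable_const.mul stronglyMeasurable_condExp))
    have hX2m : StronglyMeasurable (fun ω => X (n + 1) ω ^ 2) :=
      (continuous_pow 2).comp_stronglyMeasurable hXm
    have hX2int : Integrable (fun ω => X (n + 1) ω ^ 2) μ := by
      refine aux_int_of_bdd' hX2m.aestronglyMeasurable (R ^ 2) ?_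
      filter_upwards [hbdd (n + 1)] with ω hω
      rw [Real.norm_eq_abs, abs_pow]
      exact pow_le_pow_left₀ (abs_nonneg _) hω 2
    have hXint1 : Integrable (X (n + 1)) μ := (hint (n + 1)).integrable one_le_two
    have hquad_int : Integrable (fun ω => 1 + l * X (n + 1) ω + l ^ 2 * X (n + 1) ω ^ 2) μ := by
      refine aux_int_of_bdd' ((stronglyMeasurable_const.add
        (stronglyMeasurable_const.mul hXm)).add
          (stronglyMeasurable_const.mul hX2m)).aestronglyMeasurable
        (1 + |l| * R + l ^ 2 * R ^ 2) ?_
      filter_upwards [hbdd (n + 1)] with ω hω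
      have hc : |l * X (n + 1) ω| ≤ |l| * R := by
        rw [abs_mul]; exact mul_le_mul_of_nonneg_left hω (abs_nonneg l)
      have hd : |l ^ 2 * X (n + 1) ω ^ 2| ≤ l ^ 2 * R ^ 2 := by
        rw [abs_mul, abs_of_nonneg (sq_nonneg l)]
        refine mul_le_mul_of_nonneg_left ?_ (sq_nonneg l)
        rw [abs_pow]
        exact pow_le_pow_left₀ (abs_nonneg _) hω 2
      rw [Real.norm_eq_abs]
      calc |1 + l * X (n + 1) ω + l ^ 2 * X (n + 1) ω ^ 2|
          ≤ |1 + l * X (n + 1) ω| + |l ^ 2 * X (n + 1) ω ^ 2| := abs_add_le _ _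
        _ ≤ (|(1:ℝ)| + |l * X (n + 1) ω|) + l ^ 2 * R ^ 2 :=
            add_le_add (abs_add_le _ _) hd
        _ ≤ 1 + |l| * R + l ^ 2 * R ^ 2 := by rw [abs_one]; linarith
    have hpt : eX ≤ᵐ[μ] (fun ω => 1 + l * X (n + 1) ω + l ^ 2 * X (n + 1) ω ^ 2) := by
      filter_upwards [hbdd (n + 1)] with ω hω
      have h2 : |l * X (n + 1) ω| ≤ 1 := by
        rw [abs_mul]
        exact (mul_le_mul_of_nonneg_left hω (abs_nonneg l)).trans hl
      calc eX ω ≤ 1 + l * X (n + 1) ω + (l * X (n + 1) ω) ^ 2 := aux_exp_le_quad h2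
        _ = 1 + l * X (n + 1) ω + l ^ 2 * X (n + 1) ω ^ 2 := by ring
    have hcm : μ[eX|ℱ n] ≤ᵐ[μ]
        μ[fun ω => 1 + l * X (n + 1) ω + l ^ 2 * X (n + 1) ω ^ 2|ℱ n] :=
      condExp_mono heX_int hquad_int hpt
    have hlin : μ[fun ω => 1 + l * X (n + 1) ω + l ^ 2 * X (n + 1) ω ^ 2|ℱ n]
        =ᵐ[μ] fun ω => 1 + l ^ 2 * C ω := by
      have e0 : (fun ω => 1 + l * X (n + 1) ω + l ^ 2 * X (n + 1) ω ^ 2)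
          = (fun _ => (1:ℝ)) + (l • X (n + 1) + l ^ 2 • (fun ω => X (n + 1) ω ^ 2)) := by
        funext ω; simp [smul_eq_mul]; ring
      rw [e0]
      have e1 := condExp_add (μ := μ) (m := ℱ n) (integrable_const (1:ℝ))
        ((hXint1.smul l).add (hX2int.smul (l ^ 2)))
      have e2 := condExp_add (μ := μ) (m := ℱ n) (hXint1.smul l) (hX2int.smul (l ^ 2))
      have e3 := condExp_smul (μ := μ) (m := ℱ n) l (X (n + 1))
      have e4 := condExp_smul (μ := μ) (m := ℱ n) (l ^ 2) (fun ω => X (n + 1) ω ^ 2)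
      have e5 : μ[X (n + 1)|ℱ n] =ᵐ[μ] 0 := by
        have := hmds (n + 1) (Nat.le_add_left 1 n)
        simpa [Nat.add_sub_cancel] using this
      have e6 : μ[(fun _ => (1:ℝ))|ℱ n] = fun _ => (1:ℝ) := condExp_const (ℱ.le n) 1
      filter_upwards [e1, e2, e3, e4, e5] with ω h1 h2 h3 h4 h5
      rw [h1]
      simp only [Pi.add_apply]
      rw [h2, congrFun e6 ω]
      simp only [Pi.add_apply, h3, h4, Pi.smul_apply, smul_eq_mul, h5, Pi.zero_apply, hCdef]
      ring
    have hmul : μ[fun ω => G ω * eX ω|ℱ n] =ᵐ[μ] fun ω => G ω * (μ[eX|ℱ n]) ω :=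
      condExp_mul_of_stronglyMeasurable_left hGm hGX_int heX_int
    have hCnn : 0 ≤ᵐ[μ] C :=
      condExp_nonneg (Filter.Eventually.of_forall fun ω => sq_nonneg _)
    have hfinal : μ[fun ω => G ω * eX ω|ℱ n] ≤ᵐ[μ]
        fun ω => Real.exp (l * ∑ k ∈ Finset.Icc 1 n, X k ω
          - l ^ 2 * ∑ k ∈ Finset.Icc 1 n, (μ[fun ω' => X k ω' ^ 2|ℱ (k - 1)]) ω) := by
      filter_upwards [hmul, hcm, hlin, hCnn] with ω h1 h2 h3 h4
      rw [h1]
      have hG0 : 0 ≤ G ω := (Real.exp_pos _).le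
      have h5 : (μ[eX|ℱ n]) ω ≤ 1 + l ^ 2 * C ω := le_of_le_of_eq h2 h3
      have h6 : 1 + l ^ 2 * C ω ≤ Real.exp (l ^ 2 * C ω) := by
        linarith [Real.add_one_le_exp (l ^ 2 * C ω)]
      calc G ω * (μ[eX|ℱ n]) ω ≤ G ω * Real.exp (l ^ 2 * C ω) :=
          mul_le_mul_of_nonneg_left (h5.trans h6) hG0
        _ = Real.exp (l * ∑ k ∈ Finset.Icc 1 n, X k ω
            - l ^ 2 * ∑ k ∈ Finset.Icc 1 n, (μ[fun ω' => X k ω' ^ 2|ℱ (k - 1)]) ω) := by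
          rw [hGdef]
          simp only [← Real.exp_add]
          congr 1
          ring
    rw [hrw]
    calc ∫ ω, G ω * eX ω ∂μ
        = ∫ ω, (μ[fun ω => G ω * eX ω|ℱ n]) ω ∂μ :=
          (integral_condExp (ℱ.le n)).symm
      _ ≤ ∫ ω, Real.exp (l * ∑ k ∈ Finset.Icc 1 n, X k ω
          - l ^ 2 * ∑ k ∈ Finset.Icc 1 n, (μ[fun ω' => X k ω' ^ 2|ℱ (k - 1)]) ω) ∂μ :=
          integral_mono_ae integrable_condExp (aux_F_int hadapt hbdd l hl n) hfinal
      _ ≤ 1 := ih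

lemma aux_tail (hadapt : ∀ k, StronglyMeasurable[ℱ k] (X k))
    (hint : ∀ k, MemLp (X k) 2 μ)
    (hbdd : ∀ k, ∀ᵐ ω ∂μ, |X k ω| ≤ R)
    (hmds : ∀ k, 1 ≤ k → μ[X k | ℱ (k - 1)] =ᵐ[μ] 0)
    (l : ℝ) (hl : |l| * R ≤ 1) (n : ℕ) (τ s : ℝ) :
    (μ {ω | τ ≤ l * ∑ k ∈ Finset.Icc 1 n, X k ω
      ∧ ∑ k ∈ Finset.Icc 1 n, (μ[fun ω' => X k ω' ^ 2|ℱ (k - 1)]) ω ≤ s}).toReal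
      ≤ Real.exp (l ^ 2 * s - τ) := by
  set A := {ω | τ ≤ l * ∑ k ∈ Finset.Icc 1 n, X k ω
      ∧ ∑ k ∈ Finset.Icc 1 n, (μ[fun ω' => X k ω' ^ 2|ℱ (k - 1)]) ω ≤ s} with hA
  have hSm : Measurable (fun ω => l * ∑ k ∈ Finset.Icc 1 n, X k ω) :=
    (measurable_const.mul ((aux_S_meas hadapt n).mono (ℱ.le n)).measurable)
  have hVm : Measurable (fun ω => ∑ k ∈ Finset.Icc 1 n, (μ[fun ω' => X k ω' ^ 2|ℱ (k - 1)]) ω) :=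
    ((aux_V_meas n).mono (ℱ.le n)).measurable
  have hAm : MeasurableSet A := by
    rw [hA]
    exact (measurableSet_le measurable_const hSm).inter (measurableSet_le hVm measurable_const)
  have hFint := aux_F_int hadapt hbdd l hl n
  have key : Real.exp (τ - l ^ 2 * s) * (μ A).toReal ≤ 1 := by
    calc Real.exp (τ - l ^ 2 * s) * (μ A).toReal
        ≤ ∫ ω in A, Real.exp (l * ∑ k ∈ Finset.Icc 1 n, X k ω
          - l ^ 2 * ∑ k ∈ Finset.Icc 1 n, (μ[fun ω' => X k ω' ^ 2|ℱ (k - 1)]) ω) ∂μ := by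
          refine setIntegral_ge_of_const_le_real hAm (measure_ne_top μ A) ?_ hFint.integrableOn
          intro ω hω
          rw [Real.exp_le_exp]
          have h1 := hω.1
          have h2 : l ^ 2 * (∑ k ∈ Finset.Icc 1 n, (μ[fun ω' => X k ω' ^ 2|ℱ (k - 1)]) ω)
              ≤ l ^ 2 * s := mul_le_mul_of_nonneg_left hω.2 (sq_nonneg l)
          linarith
      _ ≤ ∫ ω, Real.exp (l * ∑ k ∈ Finset.Icc 1 n, X k ω
          - l ^ 2 * ∑ k ∈ Finset.Icc 1 n, (μ[fun ω' => X k ω' ^ 2|ℱ (k - 1)]) ω) ∂μ :=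
          setIntegral_le_integral hFint
            (Filter.Eventually.of_forall fun ω => (Real.exp_pos _).le)
      _ ≤ 1 := aux_mgf_le_one hadapt hint hbdd hmds l hl n
  have hp : (0:ℝ) < Real.exp (τ - l ^ 2 * s) := Real.exp_pos _
  calc (μ A).toReal
      = (Real.exp (τ - l ^ 2 * s) * (μ A).toReal) / Real.exp (τ - l ^ 2 * s) := by
        field_simp
    _ ≤ 1 / Real.exp (τ - l ^ 2 * s) := by gcongr
    _ = Real.exp (l ^ 2 * s - τ) := by
        rw [one_div, ← Real.exp_neg, neg_sub]

end Aux

set_option maxHeartbeats 1000000 in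
theorem stmt19 {Ω : Type*} {m0 : MeasurableSpace Ω} (μ : Measure Ω)
    [IsProbabilityMeasure μ] (ℱ : Filtration ℕ m0)
    (X : ℕ → Ω → ℝ) (n : ℕ) (R σ2 : ℝ) (hσ2 : 0 ≤ σ2)
    (K : ℕ) (hK : 1 ≤ K) (δ : ℝ) (hδ : 0 < δ ∧ δ < 1)
    (hadapt : ∀ k, StronglyMeasurable[ℱ k] (X k))
    (hint : ∀ k, MemLp (X k) 2 μ)
    (hbdd : ∀ k, ∀ᵐ ω ∂μ, |X k ω| ≤ R)
    (hmds : ∀ k, 1 ≤ k → μ[X k | ℱ (k - 1)] =ᵐ[μ] 0)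
    (hW : ∀ᵐ ω ∂μ,
      ∑ k ∈ Finset.Icc 1 n, (μ[fun ω' => (X k ω') ^ 2 | ℱ (k - 1)]) ω ≤ σ2) :
    1 - δ ≤ (μ {ω | |∑ k ∈ Finset.Icc 1 n, X k ω| ≤
        Real.sqrt (8 * max (∑ k ∈ Finset.Icc 1 n, (μ[fun ω' => (X k ω') ^ 2 | ℱ (k - 1)]) ω)
            (σ2 / 2 ^ K) * Real.log (2 * K / δ))
          + 4 / 3 * R * Real.log (2 * K / δ)}).toReal := by
  obtain ⟨hδ0, hδ1⟩ := hδ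
  have hK1 : (1:ℝ) ≤ (K:ℝ) := by exact_mod_cast hK
  have hKd_pos : (0:ℝ) < 2 * K / δ := by positivity
  have hL : 0 < Real.log (2 * (K:ℝ) / δ) := by
    apply Real.log_pos
    rw [lt_div_iff₀ hδ0]
    nlinarith
  set L := Real.log (2 * (K:ℝ) / δ) with hLdef
  haveI : (MeasureTheory.ae μ).NeBot := ae_neBot.2 (IsProbabilityMeasure.ne_zero μ)
  obtain ⟨ω₀, hω₀⟩ := (hbdd 0).exists
  have hR0 : 0 ≤ R := (abs_nonneg _).trans hω₀
  set E := {ω | |∑ k ∈ Finset.Icc 1 n, X k ω| ≤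
      Real.sqrt (8 * max (∑ k ∈ Finset.Icc 1 n, (μ[fun ω' => (X k ω') ^ 2 | ℱ (k - 1)]) ω)
        (σ2 / 2 ^ K) * L) + 4 / 3 * R * L} with hEdef
  clear_value E
  have hYm : Measurable (fun ω => ∑ k ∈ Finset.Icc 1 n, X k ω) :=
    ((aux_S_meas hadapt n).mono (ℱ.le n)).measurable
  have hWm : Measurable
      (fun ω => ∑ k ∈ Finset.Icc 1 n, (μ[fun ω' => X k ω' ^ 2|ℱ (k - 1)]) ω) :=
    ((aux_V_meas n).mono (ℱ.le n)).measurable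
  have hEm : MeasurableSet E := by
    rw [hEdef]
    refine measurableSet_le hYm.abs ?_
    exact ((Real.continuous_sqrt.measurable).comp
      (((hWm.max measurable_const).const_mul 8).mul_const L)).add measurable_const
  have hCnn : ∀ᵐ ω ∂μ, ∀ k, 0 ≤ (μ[fun ω' => X k ω' ^ 2|ℱ (k - 1)]) ω :=
    ae_all_iff.2 fun k => condExp_nonneg (Filter.Eventually.of_forall fun ω => sq_nonneg _)
  -- reduce to a bound on the complement
  suffices hEc : μ Eᶜ ≤ ENNReal.ofReal δ by
    have h1 : (μ Eᶜ).toReal ≤ δ := ENNReal.toReal_le_of_le_ofReal hδ0.le hEc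
    have h2 : (μ E).toReal + (μ Eᶜ).toReal = 1 := by
      rw [← ENNReal.toReal_add (measure_ne_top μ _) (measure_ne_top μ _),
        measure_add_measure_compl hEm]
      simp
    linarith
  rcases eq_or_lt_of_le hR0 with hReq | hR
  · -- degenerate case R = 0
    have hae : ∀ᵐ ω ∂μ, ω ∈ E := by
      have hXz : ∀ᵐ ω ∂μ, ∀ k, |X k ω| ≤ R := ae_all_iff.2 hbdd
      filter_upwards [hXz] with ω hω
      have hy : ∑ k ∈ Finset.Icc 1 n, X k ω = 0 :=
        Finset.sum_eq_zero fun k _ => by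
          have h := hω k
          rw [← hReq] at h
          exact abs_nonpos_iff.1 h
      rw [hEdef]
      simp only [Set.mem_setOf_eq]
      rw [hy, abs_zero, ← hReq]
      positivity
    have hnull : μ Eᶜ = 0 := ae_iff.1 hae
    rw [hnull]
    exact zero_le
  · -- main case R > 0
    set B : ℕ → Set Ω := fun j =>
      {ω | (Real.sqrt (4 * (σ2 / 2 ^ j) * L) + 4 / 3 * R * L ≤ ∑ k ∈ Finset.Icc 1 n, X k ω
        ∨ Real.sqrt (4 * (σ2 / 2 ^ j) * L) + 4 / 3 * R * L ≤ -∑ k ∈ Finset.Icc 1 n, X k ω)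
        ∧ ∑ k ∈ Finset.Icc 1 n, (μ[fun ω' => X k ω' ^ 2|ℱ (k - 1)]) ω ≤ σ2 / 2 ^ j} with hBdef
    clear_value B
    have hBj : ∀ j : ℕ, μ (B j) ≤ ENNReal.ofReal (δ / K) := by
      intro j
      simp only [hBdef]
      set s := σ2 / 2 ^ j with hs
      set τ := Real.sqrt (4 * s * L) + 4 / 3 * R * L with hτ
      set l := min (2 * L / τ) (1 / R) with hldef
      clear_value l
      clear_value τ
      clear_value s
      have hs0 : 0 ≤ s := by rw [hs]; positivity
      have hRL : 0 < 4 / 3 * R * L := by positivity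
      have hτpos : 0 < τ := by
        rw [hτ]
        have := Real.sqrt_nonneg (4 * s * L)
        linarith
      have hτne : τ ≠ 0 := ne_of_gt hτpos
      have hlpos : 0 < l := by
        rw [hldef]
        exact lt_min (by positivity) (by positivity)
      have hlR : |l| * R ≤ 1 := by
        rw [abs_of_pos hlpos]
        have h1 : l ≤ 1 / R := by rw [hldef]; exact min_le_right _ _
        calc l * R ≤ 1 / R * R := mul_le_mul_of_nonneg_right h1 hR.le
          _ = 1 := by field_simp
      have hsqrt_sq : Real.sqrt (4 * s * L) ^ 2 = 4 * s * L := Real.sq_sqrt (by positivity)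
      have hτsq : 4 * s * L ≤ τ ^ 2 := by
        rw [hτ]
        nlinarith [Real.sqrt_nonneg (4 * s * L), hRL.le, hsqrt_sq]
      have hexp : l ^ 2 * s - l * τ ≤ -L := by
        rcases min_cases (2 * L / τ) (1 / R) with ⟨hmin, hle⟩ | ⟨hmin, hlt⟩
        · have hlτ : l * τ = 2 * L := by
            rw [hldef, hmin]
            field_simp
          have h2 : l ^ 2 * s ≤ L := by
            rw [hldef, hmin, div_pow, div_mul_eq_mul_div,
              div_le_iff₀ (by positivity : (0:ℝ) < τ ^ 2)]
            nlinarith [mul_le_mul_of_nonneg_left hτsq hL.le, hL.le, hs0]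
          linarith
        · have hτle : τ ≤ 2 * L * R := by
            have h := hlt.le
            rw [div_le_div_iff₀ hR hτpos] at h
            linarith
          have hsle : s ≤ L * R ^ 2 / 9 := by
            have h1 : Real.sqrt (4 * s * L) ≤ 2 / 3 * L * R := by
              rw [hτ] at hτle
              linarith
            have h2 : 4 * s * L ≤ (2 / 3 * L * R) ^ 2 := by
              nlinarith [Real.sqrt_nonneg (4 * s * L), hsqrt_sq, h1]
            nlinarith [hL]
          have hfr : 4 / 3 * L ≤ 1 / R * τ := by
            rw [hτ]
            have h3 : 1 / R * (4 / 3 * R * L) = 4 / 3 * L := by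
              field_simp
            have h4 := Real.sqrt_nonneg (4 * s * L)
            nlinarith [hR]
          have hsr : (1 / R) ^ 2 * s ≤ L / 9 := by
            have hR2 : (0:ℝ) < R ^ 2 := by positivity
            have : (1 / R) ^ 2 * s = s / R ^ 2 := by field_simp
            rw [this, div_le_iff₀ hR2]
            nlinarith [hsle, hR2]
          rw [hldef, hmin]
          linarith
      have hup := aux_tail hadapt hint hbdd hmds l hlR n (l * τ) s
      have hdn := aux_tail hadapt hint hbdd hmds (-l) (by rwa [abs_neg]) n (l * τ) s
      rw [neg_sq] at hdn
      have hup' : μ {ω | l * τ ≤ l * ∑ k ∈ Finset.Icc 1 n, X k ω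
          ∧ ∑ k ∈ Finset.Icc 1 n, (μ[fun ω' => X k ω' ^ 2|ℱ (k - 1)]) ω ≤ s}
          ≤ ENNReal.ofReal (Real.exp (-L)) := by
        refine (ENNReal.le_ofReal_iff_toReal_le (measure_ne_top μ _) (Real.exp_pos _).le).2 ?_
        refine hup.trans ?_
        rw [Real.exp_le_exp]
        linarith
      have hdn' : μ {ω | l * τ ≤ -l * ∑ k ∈ Finset.Icc 1 n, X k ω
          ∧ ∑ k ∈ Finset.Icc 1 n, (μ[fun ω' => X k ω' ^ 2|ℱ (k - 1)]) ω ≤ s}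
          ≤ ENNReal.ofReal (Real.exp (-L)) := by
        refine (ENNReal.le_ofReal_iff_toReal_le (measure_ne_top μ _) (Real.exp_pos _).le).2 ?_
        refine hdn.trans ?_
        rw [Real.exp_le_exp]
        linarith
      have hsub : {ω | (τ ≤ ∑ k ∈ Finset.Icc 1 n, X k ω
          ∨ τ ≤ -∑ k ∈ Finset.Icc 1 n, X k ω)
          ∧ ∑ k ∈ Finset.Icc 1 n, (μ[fun ω' => X k ω' ^ 2|ℱ (k - 1)]) ω ≤ s}
          ⊆ {ω | l * τ ≤ l * ∑ k ∈ Finset.Icc 1 n, X k ω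
            ∧ ∑ k ∈ Finset.Icc 1 n, (μ[fun ω' => X k ω' ^ 2|ℱ (k - 1)]) ω ≤ s}
          ∪ {ω | l * τ ≤ -l * ∑ k ∈ Finset.Icc 1 n, X k ω
            ∧ ∑ k ∈ Finset.Icc 1 n, (μ[fun ω' => X k ω' ^ 2|ℱ (k - 1)]) ω ≤ s} := by
        rintro ω ⟨h1 | h1, h2⟩
        · exact Or.inl ⟨mul_le_mul_of_nonneg_left h1 hlpos.le, h2⟩
        · refine Or.inr ⟨?_, h2⟩
          have h3 := mul_le_mul_of_nonneg_left h1 hlpos.le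
          calc l * τ ≤ l * -∑ k ∈ Finset.Icc 1 n, X k ω := h3
            _ = -l * ∑ k ∈ Finset.Icc 1 n, X k ω := by ring
      calc μ _ ≤ μ (_ ∪ _) := measure_mono hsub
        _ ≤ _ + _ := measure_union_le _ _
        _ ≤ ENNReal.ofReal (Real.exp (-L)) + ENNReal.ofReal (Real.exp (-L)) :=
            add_le_add hup' hdn'
        _ = ENNReal.ofReal (Real.exp (-L) + Real.exp (-L)) :=
            (ENNReal.ofReal_add (Real.exp_pos _).le (Real.exp_pos _).le).symm
        _ = ENNReal.ofReal (δ / K) := by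
            congr 1
            have hexpL : Real.exp L = 2 * K / δ := by
              rw [hLdef]
              exact Real.exp_log hKd_pos
            rw [Real.exp_neg, hexpL]
            have hKne : (K:ℝ) ≠ 0 := by positivity
            field_simp
            ring
    have hGood : ∀ᵐ ω ∂μ,
        (∑ k ∈ Finset.Icc 1 n, (μ[fun ω' => X k ω' ^ 2|ℱ (k - 1)]) ω ≤ σ2
          ∧ 0 ≤ ∑ k ∈ Finset.Icc 1 n, (μ[fun ω' => X k ω' ^ 2|ℱ (k - 1)]) ω) := by
      filter_upwards [hW, hCnn] with ω h1 h2
      exact ⟨h1, Finset.sum_nonneg fun k _ => h2 k⟩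
    have hnull : μ {ω | ¬(∑ k ∈ Finset.Icc 1 n, (μ[fun ω' => X k ω' ^ 2|ℱ (k - 1)]) ω ≤ σ2
        ∧ 0 ≤ ∑ k ∈ Finset.Icc 1 n, (μ[fun ω' => X k ω' ^ 2|ℱ (k - 1)]) ω)} = 0 :=
      ae_iff.1 hGood
    have hsub2 : Eᶜ ⊆ (⋃ j ∈ Finset.range K, B j)
        ∪ {ω | ¬(∑ k ∈ Finset.Icc 1 n, (μ[fun ω' => X k ω' ^ 2|ℱ (k - 1)]) ω ≤ σ2
          ∧ 0 ≤ ∑ k ∈ Finset.Icc 1 n, (μ[fun ω' => X k ω' ^ 2|ℱ (k - 1)]) ω)} := by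
      intro ω hω
      by_cases hg : ∑ k ∈ Finset.Icc 1 n, (μ[fun ω' => X k ω' ^ 2|ℱ (k - 1)]) ω ≤ σ2
          ∧ 0 ≤ ∑ k ∈ Finset.Icc 1 n, (μ[fun ω' => X k ω' ^ 2|ℱ (k - 1)]) ω
      · left
        obtain ⟨j, hjK, hj1, hj2⟩ := aux_peel σ2 _ hg.1 K hK
        refine Set.mem_biUnion (Finset.mem_range.2 hjK) ?_
        simp only [hBdef, Set.mem_setOf_eq]
        have hωE : ¬ |∑ k ∈ Finset.Icc 1 n, X k ω| ≤
            Real.sqrt (8 * max (∑ k ∈ Finset.Icc 1 n, (μ[fun ω' => X k ω' ^ 2|ℱ (k - 1)]) ω)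
              (σ2 / 2 ^ K) * L) + 4 / 3 * R * L := by
          rw [hEdef] at hω
          exact hω
        push_neg at hωE
        have hsqle : Real.sqrt (4 * (σ2 / 2 ^ j) * L)
            ≤ Real.sqrt (8 * max (∑ k ∈ Finset.Icc 1 n, (μ[fun ω' => X k ω' ^ 2|ℱ (k - 1)]) ω)
              (σ2 / 2 ^ K) * L) := by
          apply Real.sqrt_le_sqrt
          have h8 : 4 * (σ2 / 2 ^ j) = 8 * (σ2 / 2 ^ (j + 1)) := by
            rw [pow_succ]
            ring
          rw [h8]
          nlinarith [hj2, hL.le]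
        have habs : Real.sqrt (4 * (σ2 / 2 ^ j) * L) + 4 / 3 * R * L
            ≤ |∑ k ∈ Finset.Icc 1 n, X k ω| := by linarith
        refine ⟨?_, hj1⟩
        rcases abs_cases (∑ k ∈ Finset.Icc 1 n, X k ω) with ⟨he, _⟩ | ⟨he, _⟩
        · rw [he] at habs
          exact Or.inl habs
        · rw [he] at habs
          exact Or.inr habs
      · right
        exact hg
    calc μ Eᶜ ≤ μ ((⋃ j ∈ Finset.range K, B j) ∪ _) := measure_mono hsub2
      _ ≤ μ (⋃ j ∈ Finset.range K, B j) + _ := measure_union_le _ _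
      _ = μ (⋃ j ∈ Finset.range K, B j) := by rw [hnull, add_zero]
      _ ≤ ∑ j ∈ Finset.range K, μ (B j) := measure_biUnion_finset_le _ _
      _ ≤ ∑ _j ∈ Finset.range K, ENNReal.ofReal (δ / K) :=
          Finset.sum_le_sum fun j _ => hBj j
      _ = K * ENNReal.ofReal (δ / K) := by
          rw [Finset.sum_const, Finset.card_range, nsmul_eq_mul]
      _ ≤ ENNReal.ofReal δ := by
          rw [← ENNReal.ofReal_natCast K, ← ENNReal.ofReal_mul (by positivity)]
          apply ENNReal.ofReal_le_ofReal
          have hKne : (K:ℝ) ≠ 0 := by positivity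
          rw [mul_comm, div_mul_cancel₀ _ hKne]
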